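/- Let p₁, p₂ be symmetric stochastic kernels on a countable set V and λ₁, λ₂ > 0, t₁ ≤ t₂. If U² := (e^{(t₂−t₁)λ₂(p₂−Id)})^{⊗n} and f : V^n → ℝ is bounded, symmetric, and positive semidefinite in each pair of variables, then U² f is again positive semidefinite in each pair of variables. -/

import Mathlib

open scoped Classical

/-- A bounded symmetric function `f : V^n → ℝ` is positive semidefinite in each pair of
variables (in the sense of Liggett) if for each pair of coordinate indices `i ≠ j`, every
fixed choice of the other coordinates and every finitely supported `β : V → ℝ`, the
quadratic form `Σ_{x,y} β(x)β(y) f(…,x,…,y,…)` is nonnegative. -/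
def IsPSDPairwise {V : Type*} {n : ℕ} (f : (Fin n → V) → ℝ) : Prop :=
  ∀ i j : Fin n, i ≠ j → ∀ (z : Fin n → V) (β : V →₀ ℝ),
    0 ≤ ∑ x ∈ β.support, ∑ y ∈ β.support,
      β x * β y * f (Function.update (Function.update z i x) j y)

/-- Iterated kernel (matrix power) of a real kernel on `V`. -/
noncomputable def kpowR {V : Type*} (p : V → V → ℝ) : ℕ → V → V → ℝ
  | 0, x, y => if x = y then 1 else 0
  | n + 1, x, y => ∑' z, p x z * kpowR p n z y


open scoped ENNReal

lemma summable_of_ofReal_ne_top {α : Type*} {φ : α → ℝ} (h0 : ∀ a, 0 ≤ φ a)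
    (h : ∑' a, ENNReal.ofReal (φ a) ≠ ⊤) : Summable φ := by
  have hc : ∀ a, ENNReal.ofReal (φ a) = ((φ a).toNNReal : ℝ≥0∞) := fun a => rfl
  rw [tsum_congr hc] at h
  exact (NNReal.summable_coe.mpr (ENNReal.tsum_coe_ne_top_iff_summable.mp h)).congr
    fun a => Real.coe_toNNReal _ (h0 a)

lemma tsum_eq_of_ofReal_eq {α : Type*} {φ : α → ℝ} (h0 : ∀ a, 0 ≤ φ a) {r : ℝ} (hr : 0 ≤ r)
    (h : ∑' a, ENNReal.ofReal (φ a) = ENNReal.ofReal r) : Summable φ ∧ ∑' a, φ a = r := by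
  have hs : Summable φ := summable_of_ofReal_ne_top h0 (h ▸ ENNReal.ofReal_ne_top)
  refine ⟨hs, ?_⟩
  have := (ENNReal.ofReal_tsum_of_nonneg h0 hs).trans h
  rwa [ENNReal.ofReal_eq_ofReal_iff (tsum_nonneg h0) hr] at this

lemma tsum_pi_fin {V : Type*} : ∀ (n : ℕ) (g : Fin n → V → ℝ≥0∞),
    ∑' u : Fin n → V, ∏ k, g k (u k) = ∏ k, ∑' a, g k a := by
  intro n
  induction n with
  | zero =>
    intro g
    simp only [Finset.univ_eq_empty, Finset.prod_empty]
    exact tsum_eq_single (fun i => i.elim0) (fun b hb => absurd (funext fun i => i.elim0) hb)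
  | succ n ih =>
    intro g
    rw [← Equiv.tsum_eq (Fin.consEquiv (fun _ : Fin (n+1) => V))
      (fun u => ∏ k, g k (u k))]
    have : ∀ p : V × (Fin n → V),
        (∏ k, g k ((Fin.consEquiv (fun _ : Fin (n+1) => V)) p k))
        = g 0 p.1 * ∏ k : Fin n, g k.succ (p.2 k) := by
      rintro ⟨a, v⟩
      rw [Fin.prod_univ_succ]
      simp [Fin.consEquiv]
    rw [tsum_congr this, ENNReal.tsum_prod']
    simp_rw [ENNReal.tsum_mul_left, ENNReal.tsum_mul_right]
    rw [ih fun k => g k.succ, Fin.prod_univ_succ]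

lemma tsum_pi_fintype {V ι : Type*} [Fintype ι] (g : ι → V → ℝ≥0∞) :
    ∑' u : ι → V, ∏ k, g k (u k) = ∏ k, ∑' a, g k a := by
  classical
  obtain ⟨m, ⟨e⟩⟩ : ∃ m, Nonempty (Fin m ≃ ι) := ⟨Fintype.card ι, ⟨(Fintype.equivFin ι).symm⟩⟩
  rw [← Equiv.tsum_eq (Equiv.arrowCongr e (Equiv.refl V)) (fun u => ∏ k, g k (u k))]
  have : ∀ u : Fin m → V, (∏ k, g k ((Equiv.arrowCongr e (Equiv.refl V) u) k))
      = ∏ k' : Fin m, g (e k') (u k') := by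
    intro u
    rw [← Equiv.prod_comp e (fun k => g k (Equiv.arrowCongr e (Equiv.refl V) u k))]
    refine Finset.prod_congr rfl fun k' _ => ?_
    simp [Equiv.arrowCongr]
  rw [tsum_congr this, tsum_pi_fin m (fun k' => g (e k')), Equiv.prod_comp e (fun k => ∑' a, g k a)]

lemma kpow_nonneg {V : Type*} (p : V → V → ℝ) (h0 : ∀ x y, 0 ≤ p x y) :
    ∀ (k : ℕ) (x y : V), 0 ≤ kpowR p k x y := by
  intro k
  induction k with
  | zero => intro x y; simp only [kpowR]; split <;> norm_num
  | succ k ih =>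
    intro x y
    exact tsum_nonneg fun z => mul_nonneg (h0 x z) (ih z y)

lemma kpow_row {V : Type*} (p : V → V → ℝ) (h0 : ∀ x y, 0 ≤ p x y)
    (hst : ∀ x, ∑' y, p x y = 1) :
    ∀ (k : ℕ) (x : V), ∑' y, ENNReal.ofReal (kpowR p k x y) = 1 := by
  have hpsum : ∀ x, Summable (p x) := by
    intro x
    by_contra h
    have := hst x
    rw [tsum_eq_zero_of_not_summable h] at this
    exact zero_ne_one this
  intro k
  induction k with
  | zero =>
    intro x
    rw [tsum_eq_single x (fun b hb => by simp [kpowR, (Ne.symm hb : ¬ x = b)])]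
    simp [kpowR]
  | succ k ih =>
    intro x
    have hle1 : ∀ z y, kpowR p k z y ≤ 1 := by
      intro z y
      have h1 : ENNReal.ofReal (kpowR p k z y) ≤ 1 := by
        rw [← ih z]; exact ENNReal.le_tsum y
      exact ENNReal.ofReal_le_one.mp h1
    have hsz : ∀ y, Summable (fun z => p x z * kpowR p k z y) := by
      intro y
      exact (hpsum x).of_nonneg_of_le
        (fun z => mul_nonneg (h0 x z) (kpow_nonneg p h0 k z y))
        (fun z => mul_le_of_le_one_right (h0 x z) (hle1 z y))
    have hrepr : ∀ y, ENNReal.ofReal (kpowR p (k+1) x y)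
        = ∑' z, ENNReal.ofReal (p x z) * ENNReal.ofReal (kpowR p k z y) := by
      intro y
      rw [show kpowR p (k+1) x y = ∑' z, p x z * kpowR p k z y from rfl,
        ENNReal.ofReal_tsum_of_nonneg
          (fun z => mul_nonneg (h0 x z) (kpow_nonneg p h0 k z y)) (hsz y)]
      exact tsum_congr fun z => ENNReal.ofReal_mul (h0 x z)
    calc ∑' y, ENNReal.ofReal (kpowR p (k+1) x y)
        = ∑' (y) (z), ENNReal.ofReal (p x z) * ENNReal.ofReal (kpowR p k z y) :=
          tsum_congr hrepr
      _ = ∑' (z) (y), ENNReal.ofReal (p x z) * ENNReal.ofReal (kpowR p k z y) :=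
          ENNReal.tsum_comm
      _ = ∑' z, ENNReal.ofReal (p x z) := by
          refine tsum_congr fun z => ?_
          rw [ENNReal.tsum_mul_left, ih z, mul_one]
      _ = ENNReal.ofReal (∑' z, p x z) :=
          (ENNReal.ofReal_tsum_of_nonneg (h0 x) (hpsum x)).symm
      _ = 1 := by rw [hst x, ENNReal.ofReal_one]

lemma q_facts {V : Type*} (p : V → V → ℝ) (h0 : ∀ x y, 0 ≤ p x y)
    (hst : ∀ x, ∑' y, p x y = 1) (μ : ℝ) (hμ : 0 ≤ μ) (q : V → V → ℝ)
    (hq : ∀ x y, q x y = ∑' k : ℕ,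
      Real.exp (-μ) * μ ^ k / (Nat.factorial k) * kpowR p k x y) :
    (∀ x y, 0 ≤ q x y) ∧ (∀ x, ∑' y, ENNReal.ofReal (q x y) = 1) := by
  set c : ℕ → ℝ := fun k => Real.exp (-μ) * μ ^ k / (Nat.factorial k) with hc
  have hc0 : ∀ k, 0 ≤ c k := fun k =>
    div_nonneg (mul_nonneg (Real.exp_pos _).le (pow_nonneg hμ _)) (Nat.cast_nonneg _)
  have hcs : Summable c := by
    have := (Real.summable_pow_div_factorial μ).mul_left (Real.exp (-μ))
    exact this.congr fun k => (mul_div_assoc _ _ _).symm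
  have hct : ∑' k, c k = 1 := by
    have h1 : ∑' k, c k = Real.exp (-μ) * ∑' k : ℕ, μ ^ k / (Nat.factorial k) := by
      rw [← tsum_mul_left]
      exact tsum_congr fun k => mul_div_assoc _ _ _
    have h2 : (∑' k : ℕ, μ ^ k / (Nat.factorial k)) = Real.exp μ := by
      rw [Real.exp_eq_exp_ℝ, NormedSpace.exp_eq_tsum_div]
    rw [h1, h2, ← Real.exp_add, neg_add_cancel, Real.exp_zero]
  have hle1 := fun k z y => by
    have h1 : ENNReal.ofReal (kpowR p k z y) ≤ 1 := by
      rw [← kpow_row p h0 hst k z]; exact ENNReal.le_tsum y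
    exact ENNReal.ofReal_le_one.mp h1
  have hsum : ∀ x y, Summable (fun k => c k * kpowR p k x y) := fun x y =>
    hcs.of_nonneg_of_le (fun k => mul_nonneg (hc0 k) (kpow_nonneg p h0 k x y))
      (fun k => mul_le_of_le_one_right (hc0 k) (hle1 k x y))
  have hqn : ∀ x y, 0 ≤ q x y := fun x y => by
    rw [hq x y]
    exact tsum_nonneg fun k => mul_nonneg (hc0 k) (kpow_nonneg p h0 k x y)
  refine ⟨hqn, fun x => ?_⟩
  have hrepr : ∀ y, ENNReal.ofReal (q x y)
      = ∑' k, ENNReal.ofReal (c k) * ENNReal.ofReal (kpowR p k x y) := by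
    intro y
    rw [hq x y, ENNReal.ofReal_tsum_of_nonneg
      (fun k => mul_nonneg (hc0 k) (kpow_nonneg p h0 k x y)) (hsum x y)]
    exact tsum_congr fun k => ENNReal.ofReal_mul (hc0 k)
  calc ∑' y, ENNReal.ofReal (q x y)
      = ∑' (y) (k), ENNReal.ofReal (c k) * ENNReal.ofReal (kpowR p k x y) :=
        tsum_congr hrepr
    _ = ∑' (k) (y : V), ENNReal.ofReal (c k) * ENNReal.ofReal (kpowR p k x y) :=
        ENNReal.tsum_comm
    _ = ∑' k, ENNReal.ofReal (c k) := by
        refine tsum_congr fun k => ?_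
        rw [ENNReal.tsum_mul_left, kpow_row p h0 hst k x, mul_one]
    _ = ENNReal.ofReal (∑' k, c k) := (ENNReal.ofReal_tsum_of_nonneg hc0 hcs).symm
    _ = 1 := by rw [hct, ENNReal.ofReal_one]


lemma prod_split {M : Type*} [CommMonoid M] {n : ℕ} (i j : Fin n) (hij : i ≠ j) (g : Fin n → M) :
    ∏ k, g k = g i * g j * ∏ k : {k : Fin n // k ≠ i ∧ k ≠ j}, g k.1 := by
  classical
  have hmem : i ∈ Finset.univ.erase j := Finset.mem_erase.mpr ⟨hij, Finset.mem_univ i⟩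
  have e1 : (∏ k ∈ (Finset.univ.erase j).erase i, g k)
      = ∏ k : {k : Fin n // k ≠ i ∧ k ≠ j}, g k.1 := by
    refine Finset.prod_subtype _ (fun k => ?_) g
    simp only [Finset.mem_erase, Finset.mem_univ, and_true]
  calc ∏ k, g k = g j * ∏ k ∈ Finset.univ.erase j, g k :=
        (Finset.mul_prod_erase _ g (Finset.mem_univ j)).symm
    _ = g j * (g i * ∏ k ∈ (Finset.univ.erase j).erase i, g k) := by
        rw [Finset.mul_prod_erase _ g hmem]
    _ = g i * g j * ∏ k ∈ (Finset.univ.erase j).erase i, g k := by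
        rw [mul_left_comm, mul_assoc]
    _ = _ := by rw [e1]

def splitEquiv {V : Type*} {n : ℕ} (i j : Fin n) (hij : i ≠ j) :
    (Fin n → V) ≃ (({k : Fin n // k ≠ i ∧ k ≠ j} → V) × V × V) where
  toFun u := (fun k => u k.1, u i, u j)
  invFun p := fun k => if h1 : k = i then p.2.1 else if h2 : k = j then p.2.2 else p.1 ⟨k, h1, h2⟩
  left_inv u := by
    funext k
    show (if h1 : k = i then u i else if h2 : k = j then u j else u k) = u k
    by_cases h1 : k = i
    · rw [dif_pos h1, h1]
    · by_cases h2 : k = j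
      · rw [dif_neg h1, dif_pos h2, h2]
      · rw [dif_neg h1, dif_neg h2]
  right_inv p := by
    refine Prod.ext ?_ (Prod.ext ?_ ?_)
    · funext k
      simp [k.2.1, k.2.2]
    · simp
    · simp [Ne.symm hij]

lemma splitEquiv_symm_apply {V : Type*} {n : ℕ} (i j : Fin n) (hij : i ≠ j)
    (p : ({k : Fin n // k ≠ i ∧ k ≠ j} → V) × V × V) :
    ⇑(splitEquiv i j hij).symm p
      = fun k => if h1 : k = i then p.2.1 else if h2 : k = j then p.2.2 else p.1 ⟨k, h1, h2⟩ :=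
  rfl

lemma splitEquiv_symm_apply' {V : Type*} {n : ℕ} (i j : Fin n) (hij : i ≠ j)
    (p : ({k : Fin n // k ≠ i ∧ k ≠ j} → V) × V × V) (k : Fin n) :
    (splitEquiv i j hij).symm p k
      = if h1 : k = i then p.2.1 else if h2 : k = j then p.2.2 else p.1 ⟨k, h1, h2⟩ :=
  rfl

lemma splitEquiv_symm_update {V : Type*} {n : ℕ} (i j : Fin n) (hij : i ≠ j)
    (v : {k : Fin n // k ≠ i ∧ k ≠ j} → V) (a b a₀ b₀ : V) :
    (splitEquiv i j hij).symm (v, a, b)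
      = Function.update (Function.update ((splitEquiv i j hij).symm (v, a₀, b₀)) i a) j b := by
  funext k
  by_cases h2 : k = j
  · subst h2
    rw [splitEquiv_symm_apply', Function.update_self, dif_neg (Ne.symm hij), dif_pos rfl]
  · by_cases h1 : k = i
    · subst h1
      rw [splitEquiv_symm_apply', Function.update_of_ne h2, Function.update_self, dif_pos rfl]
    · rw [splitEquiv_symm_apply', Function.update_of_ne h2, Function.update_of_ne h1,
        splitEquiv_symm_apply', dif_neg h1, dif_neg h2, dif_neg h1, dif_neg h2]

lemma tsum_psd_nonneg {V : Type*} (γ : V → ℝ) (K : V → V → ℝ)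
    (hsum : Summable fun p : V × V => γ p.1 * γ p.2 * K p.1 p.2)
    (hpos : ∀ F : Finset V, 0 ≤ ∑ a ∈ F, ∑ b ∈ F, γ a * γ b * K a b) :
    0 ≤ ∑' p : V × V, γ p.1 * γ p.2 * K p.1 p.2 := by
  have hten : Filter.Tendsto (fun F : Finset V => F ×ˢ F) Filter.atTop Filter.atTop :=
    Filter.tendsto_atTop_finset_of_monotone
      (fun F G hFG => Finset.product_subset_product hFG hFG)
      (fun p => ⟨{p.1, p.2}, by simp⟩)
  have hcomp := (Filter.Tendsto.comp hsum.hasSum hten :)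
  refine ge_of_tendsto hcomp (Filter.Eventually.of_forall fun F => ?_)
  show 0 ≤ ∑ p ∈ F ×ˢ F, γ p.1 * γ p.2 * K p.1 p.2
  rw [Finset.sum_product]
  exact hpos F

set_option maxHeartbeats 1000000 in
/-- Let `p₂` be a symmetric stochastic kernel on a countable set `V`, `λ₂ > 0`, `t₁ ≤ t₂`,
and let `q = e^{(t₂−t₁)λ₂(p₂−Id)}` be the corresponding heat kernel.  If
`f : V^n → ℝ` is bounded, symmetric, and positive semidefinite in each pair of variables,
then so is `U² f` where `U² = q^{⊗n}` acts coordinatewise. -/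
theorem stmt16 {V : Type*} [Countable V] (n : ℕ)
    (p₂ : V → V → ℝ)
    (hp₂nonneg : ∀ x y, 0 ≤ p₂ x y)
    (hp₂symm : ∀ x y, p₂ x y = p₂ y x)
    (hp₂stoch : ∀ x, ∑' y, p₂ x y = 1)
    (lam t₁ t₂ : ℝ) (hlam : 0 < lam) (ht : t₁ ≤ t₂)
    (q : V → V → ℝ)
    (hq : ∀ x y, q x y = ∑' k : ℕ,
      Real.exp (-((t₂ - t₁) * lam)) * ((t₂ - t₁) * lam) ^ k / (Nat.factorial k)
        * kpowR p₂ k x y)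
    (f : (Fin n → V) → ℝ) (B : ℝ) (hfB : ∀ x, |f x| ≤ B)
    (hfsym : ∀ (e : Equiv.Perm (Fin n)) (x : Fin n → V), f (x ∘ e) = f x)
    (hfpsd : IsPSDPairwise f)
    (Uf : (Fin n → V) → ℝ)
    (hUf : ∀ x, Uf x = ∑' y : Fin n → V, (∏ i, q (x i) (y i)) * f y) :
    IsPSDPairwise Uf := by
  intro i j hij z β
  rcases isEmpty_or_nonempty V with hV | hV
  · have hs : β.support = ∅ := Finset.eq_empty_of_isEmpty _
    simp [hs]
  obtain ⟨v₀⟩ := hV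
  have hμ : 0 ≤ (t₂ - t₁) * lam := mul_nonneg (sub_nonneg.mpr ht) hlam.le
  obtain ⟨hq0, hqrow⟩ := q_facts p₂ hp₂nonneg hp₂stoch ((t₂ - t₁) * lam) hμ q hq
  have hqsum : ∀ x, Summable (q x) := fun x =>
    summable_of_ofReal_ne_top (hq0 x) (by rw [hqrow x]; exact ENNReal.one_ne_top)
  have hB : 0 ≤ B := le_trans (abs_nonneg _) (hfB (fun _ => v₀))
  -- the product kernel is summable with total mass one
  have key1 : ∀ w : Fin n → V, Summable (fun u : Fin n → V => ∏ k, q (w k) (u k))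
      ∧ (∑' u : Fin n → V, ∏ k, q (w k) (u k)) = 1 := by
    intro w
    refine tsum_eq_of_ofReal_eq (fun u => Finset.prod_nonneg fun k _ => hq0 _ _) zero_le_one ?_
    rw [ENNReal.ofReal_one]
    calc ∑' u : Fin n → V, ENNReal.ofReal (∏ k, q (w k) (u k))
        = ∑' u : Fin n → V, ∏ k, ENNReal.ofReal (q (w k) (u k)) :=
          tsum_congr fun u => ENNReal.ofReal_prod_of_nonneg (fun k _ => hq0 _ _)
      _ = ∏ k, ∑' a : V, ENNReal.ofReal (q (w k) a) :=
          tsum_pi_fintype (fun k a => ENNReal.ofReal (q (w k) a))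
      _ = 1 := by simp only [hqrow, Finset.prod_const_one]
  have key2 : ∀ x y : V, Summable (fun u : Fin n → V =>
      (∏ k, q (Function.update (Function.update z i x) j y k) (u k)) * f u) := by
    intro x y
    refine Summable.of_norm_bounded
      (((key1 (Function.update (Function.update z i x) j y)).1).mul_left B) (fun u => ?_)
    have hp : (0:ℝ) ≤ ∏ k, q (Function.update (Function.update z i x) j y k) (u k) :=
      Finset.prod_nonneg fun k _ => hq0 _ _
    rw [Real.norm_eq_abs, abs_mul, abs_of_nonneg hp, mul_comm B]
    exact mul_le_mul_of_nonneg_left (hfB u) hp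
  set γ : V → ℝ := fun a => ∑ x ∈ β.support, β x * q x a with hγ
  have hγa : Summable (fun a => |γ a|) := by
    have hγb : Summable (fun a => ∑ x ∈ β.support, |β x| * q x a) :=
      summable_sum fun x _ => (hqsum x).mul_left _
    refine hγb.of_nonneg_of_le (fun a => abs_nonneg _) (fun a => ?_)
    simp only [hγ]
    refine (Finset.abs_sum_le_sum_abs _ _).trans (le_of_eq ?_)
    exact Finset.sum_congr rfl fun x _ => by rw [abs_mul, abs_of_nonneg (hq0 x a)]
  set CC : (Fin n → V) → ℝ :=
    fun u => ∏ k : {k : Fin n // k ≠ i ∧ k ≠ j}, q (z k.1) (u k.1) with hCC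
  have hCC0 : ∀ u, 0 ≤ CC u := fun u => Finset.prod_nonneg fun k _ => hq0 _ _
  set Y : ({k : Fin n // k ≠ i ∧ k ≠ j} → V) → (Fin n → V) :=
    fun v => (splitEquiv (V := V) i j hij).symm (v, v₀, v₀) with hY
  -- pointwise product-splitting identity
  have hT : ∀ (x y : V) (u : Fin n → V),
      (∏ k, q (Function.update (Function.update z i x) j y k) (u k)) * f u
        = q x (u i) * q y (u j) * (CC u * f u) := by
    intro x y u
    rw [prod_split i j hij (fun k => q (Function.update (Function.update z i x) j y k) (u k))]
    have h1 : Function.update (Function.update z i x) j y i = x := by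
      rw [Function.update_of_ne hij, Function.update_self]
    have h2 : Function.update (Function.update z i x) j y j = y := Function.update_self _ _ _
    have h3 : (∏ k : {k : Fin n // k ≠ i ∧ k ≠ j},
        q (Function.update (Function.update z i x) j y k.1) (u k.1)) = CC u := by
      simp only [hCC]
      refine Finset.prod_congr rfl fun k _ => ?_
      rw [Function.update_of_ne k.2.2, Function.update_of_ne k.2.1]
    rw [h1, h2, h3]
    ring
  have PI : ∀ u : Fin n → V,
      (∑ p ∈ β.support ×ˢ β.support, β p.1 * β p.2 *
        ((∏ k, q (Function.update (Function.update z i p.1) j p.2 k) (u k)) * f u))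
      = γ (u i) * γ (u j) * (CC u * f u) := by
    intro u
    calc (∑ p ∈ β.support ×ˢ β.support, β p.1 * β p.2 *
          ((∏ k, q (Function.update (Function.update z i p.1) j p.2 k) (u k)) * f u))
        = ∑ p ∈ β.support ×ˢ β.support,
            (β p.1 * q p.1 (u i)) * (β p.2 * q p.2 (u j)) * (CC u * f u) :=
          Finset.sum_congr rfl fun p _ => by rw [hT p.1 p.2 u]; ring
      _ = (∑ p ∈ β.support ×ˢ β.support, (β p.1 * q p.1 (u i)) * (β p.2 * q p.2 (u j)))
            * (CC u * f u) := (Finset.sum_mul _ _ _).symm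
      _ = (∑ x ∈ β.support, β x * q x (u i)) * (∑ y ∈ β.support, β y * q y (u j))
            * (CC u * f u) := by
          rw [Finset.sum_product' (f := fun a b : V =>
              (β a * q a (u i)) * (β b * q b (u j))), ← Finset.sum_mul_sum]
      _ = γ (u i) * γ (u j) * (CC u * f u) := rfl
  -- the function h
  have hsh : Summable (fun u : Fin n → V => γ (u i) * γ (u j) * (CC u * f u)) := by
    refine (summable_sum (s := β.support ×ˢ β.support)
      (f := fun p u => β p.1 * β p.2 *
        ((∏ k, q (Function.update (Function.update z i p.1) j p.2 k) (u k)) * f u))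
      fun p _ => (key2 p.1 p.2).mul_left _).congr PI
  -- key pointwise identity after reindexing
  have hkey : ∀ (v : {k : Fin n // k ≠ i ∧ k ≠ j} → V) (a b : V),
      γ ((splitEquiv (V := V) i j hij).symm (v, a, b) i)
        * γ ((splitEquiv (V := V) i j hij).symm (v, a, b) j)
        * (CC ((splitEquiv (V := V) i j hij).symm (v, a, b))
          * f ((splitEquiv (V := V) i j hij).symm (v, a, b)))
      = CC (Y v) * (γ a * γ b *
          f (Function.update (Function.update (Y v) i a) j b)) := by
    intro v a b
    have hei : (splitEquiv (V := V) i j hij).symm (v, a, b) i = a := by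
      rw [splitEquiv_symm_apply' i j hij, dif_pos rfl]
    have hej : (splitEquiv (V := V) i j hij).symm (v, a, b) j = b := by
      rw [splitEquiv_symm_apply' i j hij, dif_neg (Ne.symm hij), dif_pos rfl]
    have hCCe : CC ((splitEquiv (V := V) i j hij).symm (v, a, b)) = CC (Y v) := by
      simp only [hCC, hY]
      refine Finset.prod_congr rfl fun k _ => ?_
      rw [splitEquiv_symm_apply' i j hij, splitEquiv_symm_apply' i j hij,
        dif_neg k.2.1, dif_neg k.2.2, dif_neg k.2.1, dif_neg k.2.2]
    have hfe : f ((splitEquiv (V := V) i j hij).symm (v, a, b))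
        = f (Function.update (Function.update (Y v) i a) j b) := by
      rw [hY]
      exact congrArg f (splitEquiv_symm_update i j hij v a b v₀ v₀)
    rw [hei, hej, hCCe, hfe]
    ring
  have hfull : Summable (fun p : ({k : Fin n // k ≠ i ∧ k ≠ j} → V) × V × V =>
      γ ((splitEquiv (V := V) i j hij).symm p i)
        * γ ((splitEquiv (V := V) i j hij).symm p j)
        * (CC ((splitEquiv (V := V) i j hij).symm p)
          * f ((splitEquiv (V := V) i j hij).symm p))) :=
    ((splitEquiv (V := V) i j hij).symm.summable_iff
      (f := fun u => γ (u i) * γ (u j) * (CC u * f u))).mpr hsh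
  have base : Summable (fun ab : V × V => |γ ab.1| * |γ ab.2|) :=
    hγa.mul_of_nonneg hγa (fun a => abs_nonneg _) (fun a => abs_nonneg _)
  have hinner : ∀ v : {k : Fin n // k ≠ i ∧ k ≠ j} → V,
      Summable (fun ab : V × V =>
        γ ((splitEquiv (V := V) i j hij).symm (v, ab) i)
          * γ ((splitEquiv (V := V) i j hij).symm (v, ab) j)
          * (CC ((splitEquiv (V := V) i j hij).symm (v, ab))
            * f ((splitEquiv (V := V) i j hij).symm (v, ab)))) := by
    intro v
    refine Summable.of_norm_bounded (base.mul_left (CC (Y v) * B)) (fun ab => ?_)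
    rw [Real.norm_eq_abs, hkey v ab.1 ab.2, abs_mul, abs_mul, abs_mul,
      abs_of_nonneg (hCC0 _)]
    calc CC (Y v) * (|γ ab.1| * |γ ab.2| * |f (Function.update
          (Function.update (Y v) i ab.1) j ab.2)|)
        ≤ CC (Y v) * (|γ ab.1| * |γ ab.2| * B) :=
          mul_le_mul_of_nonneg_left (mul_le_mul_of_nonneg_left (hfB _)
            (mul_nonneg (abs_nonneg _) (abs_nonneg _))) (hCC0 _)
      _ = CC (Y v) * B * (|γ ab.1| * |γ ab.2|) := by ring
  -- the inner quadratic forms are nonnegative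
  have hG : ∀ v : {k : Fin n // k ≠ i ∧ k ≠ j} → V,
      0 ≤ ∑' ab : V × V, γ ab.1 * γ ab.2 *
        f (Function.update (Function.update (Y v) i ab.1) j ab.2) := by
    intro v
    refine tsum_psd_nonneg γ
      (fun a b => f (Function.update (Function.update (Y v) i a) j b)) ?_ ?_
    · refine Summable.of_norm_bounded (base.mul_left B) (fun ab => ?_)
      rw [Real.norm_eq_abs, abs_mul, abs_mul]
      calc |γ ab.1| * |γ ab.2| * |f (Function.update
            (Function.update (Y v) i ab.1) j ab.2)|
          ≤ |γ ab.1| * |γ ab.2| * B :=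
            mul_le_mul_of_nonneg_left (hfB _)
              (mul_nonneg (abs_nonneg _) (abs_nonneg _))
        _ = B * (|γ ab.1| * |γ ab.2|) := by ring
    · intro F
      set βF : V →₀ ℝ := Finsupp.onFinset F (fun a => if a ∈ F then γ a else 0)
        (fun a ha => by by_contra hc; exact ha (if_neg hc)) with hβF
      have h1 := hfpsd i j hij (Y v) βF
      have hsub : βF.support ⊆ F := Finsupp.support_onFinset_subset
      have hval : ∀ a ∈ F, βF a = γ a := fun a ha => by
        rw [hβF, Finsupp.onFinset_apply, if_pos ha]
      have h2 : (∑ x ∈ βF.support, ∑ y ∈ βF.support,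
            βF x * βF y * f (Function.update (Function.update (Y v) i x) j y))
          = ∑ x ∈ F, ∑ y ∈ F,
            βF x * βF y * f (Function.update (Function.update (Y v) i x) j y) := by
        rw [Finset.sum_congr rfl (fun x _ => Finset.sum_subset hsub
          (fun y _ hy => by rw [Finsupp.notMem_support_iff.mp hy, mul_zero, zero_mul]))]
        refine Finset.sum_subset hsub (fun x _ hx => ?_)
        have : βF x = 0 := Finsupp.notMem_support_iff.mp hx
        simp [this]
      rw [h2] at h1
      calc (0:ℝ) ≤ _ := h1
        _ = ∑ a ∈ F, ∑ b ∈ F, γ a * γ b *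
            f (Function.update (Function.update (Y v) i a) j b) :=
          Finset.sum_congr rfl fun a ha => Finset.sum_congr rfl fun b hb => by
            rw [hval a ha, hval b hb]
  -- main computation
  have step1 : (∑ x ∈ β.support, ∑ y ∈ β.support,
        β x * β y * Uf (Function.update (Function.update z i x) j y))
      = ∑ p ∈ β.support ×ˢ β.support,
          β p.1 * β p.2 * Uf (Function.update (Function.update z i p.1) j p.2) :=
    (Finset.sum_product _ _ (fun p : V × V =>
      β p.1 * β p.2 * Uf (Function.update (Function.update z i p.1) j p.2))).symm
  have step2 : (∑ p ∈ β.support ×ˢ β.support,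
          β p.1 * β p.2 * Uf (Function.update (Function.update z i p.1) j p.2))
      = ∑ p ∈ β.support ×ˢ β.support, ∑' u : Fin n → V, β p.1 * β p.2 *
          ((∏ k, q (Function.update (Function.update z i p.1) j p.2 k) (u k)) * f u) := by
    refine Finset.sum_congr rfl fun p _ => ?_
    rw [hUf, ← tsum_mul_left]
  have step3 : (∑ p ∈ β.support ×ˢ β.support, ∑' u : Fin n → V, β p.1 * β p.2 *
          ((∏ k, q (Function.update (Function.update z i p.1) j p.2 k) (u k)) * f u))
      = ∑' u : Fin n → V, ∑ p ∈ β.support ×ˢ β.support, β p.1 * β p.2 *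
          ((∏ k, q (Function.update (Function.update z i p.1) j p.2 k) (u k)) * f u) :=
    (Summable.tsum_finsetSum fun p _ => (key2 p.1 p.2).mul_left _).symm
  have step4 : (∑' u : Fin n → V, ∑ p ∈ β.support ×ˢ β.support, β p.1 * β p.2 *
          ((∏ k, q (Function.update (Function.update z i p.1) j p.2 k) (u k)) * f u))
      = ∑' u : Fin n → V, γ (u i) * γ (u j) * (CC u * f u) := tsum_congr PI
  have step5 : (∑' u : Fin n → V, γ (u i) * γ (u j) * (CC u * f u))
      = ∑' p : ({k : Fin n // k ≠ i ∧ k ≠ j} → V) × V × V,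
          γ ((splitEquiv (V := V) i j hij).symm p i)
            * γ ((splitEquiv (V := V) i j hij).symm p j)
            * (CC ((splitEquiv (V := V) i j hij).symm p)
              * f ((splitEquiv (V := V) i j hij).symm p)) :=
    ((splitEquiv (V := V) i j hij).symm.tsum_eq
      (fun u => γ (u i) * γ (u j) * (CC u * f u))).symm
  have step6 : (∑' p : ({k : Fin n // k ≠ i ∧ k ≠ j} → V) × V × V,
          γ ((splitEquiv (V := V) i j hij).symm p i)
            * γ ((splitEquiv (V := V) i j hij).symm p j)
            * (CC ((splitEquiv (V := V) i j hij).symm p)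
              * f ((splitEquiv (V := V) i j hij).symm p)))
      = ∑' v : {k : Fin n // k ≠ i ∧ k ≠ j} → V, ∑' ab : V × V,
          γ ((splitEquiv (V := V) i j hij).symm (v, ab) i)
            * γ ((splitEquiv (V := V) i j hij).symm (v, ab) j)
            * (CC ((splitEquiv (V := V) i j hij).symm (v, ab))
              * f ((splitEquiv (V := V) i j hij).symm (v, ab))) :=
    Summable.tsum_prod' hfull hinner
  have step7 : (∑' v : {k : Fin n // k ≠ i ∧ k ≠ j} → V, ∑' ab : V × V,
          γ ((splitEquiv (V := V) i j hij).symm (v, ab) i)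
            * γ ((splitEquiv (V := V) i j hij).symm (v, ab) j)
            * (CC ((splitEquiv (V := V) i j hij).symm (v, ab))
              * f ((splitEquiv (V := V) i j hij).symm (v, ab))))
      = ∑' v : {k : Fin n // k ≠ i ∧ k ≠ j} → V, CC (Y v) * ∑' ab : V × V,
          γ ab.1 * γ ab.2 *
            f (Function.update (Function.update (Y v) i ab.1) j ab.2) := by
    refine tsum_congr fun v => ?_
    rw [← tsum_mul_left]
    exact tsum_congr fun ab => hkey v ab.1 ab.2
  rw [step1, step2, step3, step4, step5, step6, step7]
  exact tsum_nonneg fun v => mul_nonneg (hCC0 _) (hG v)
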